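/- Let Y be an fpc and f a variable not occurring in Y, and let A_Y = Y(λz.fzz). Call a reduct M of A_Y balanced if s ≡ t (syntactic equality up to renaming of bound variables) for every subterm of M of the form f s t in which the displayed occurrence of f is a free occurrence of the variable f. Then for every M with A_Y ↠β M there exists a balanced N with M ↠β N. -/

import Mathlib

/-- Untyped λ-terms in de Bruijn notation (the variables are `ℕ`). -/
inductive Lam : Type
  | var : ℕ → Lam
  | app : Lam → Lam → Lam
  | abs : Lam → Lam
  deriving DecidableEq

namespace Lam

/-- Shift the free de Bruijn indices `≥ d` up by one. -/
def lift (d : ℕ) : Lam → Lam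
  | var n => if n < d then var n else var (n + 1)
  | app s t => app (lift d s) (lift d t)
  | abs t => abs (lift (d + 1) t)

/-- Capture-avoiding substitution `t[k := u]`. -/
def subst : Lam → ℕ → Lam → Lam
  | var n, k, u => if n < k then var n else if n = k then u else var (n - 1)
  | app s t, k, u => app (subst s k u) (subst t k u)
  | abs t, k, u => abs (subst t (k + 1) (lift 0 u))

/-- One-step β-reduction `→β`: the compatible closure of the β-rule. -/
inductive Beta : Lam → Lam → Prop
  | beta (t u : Lam) : Beta (Lam.app (Lam.abs t) u) (subst t 0 u)
  | appL {s s' : Lam} (t : Lam) : Beta s s' → Beta (Lam.app s t) (Lam.app s' t)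
  | appR (s : Lam) {t t' : Lam} : Beta t t' → Beta (Lam.app s t) (Lam.app s t')
  | abs {t t' : Lam} : Beta t t' → Beta (Lam.abs t) (Lam.abs t')

/-- `↠β`: the reflexive–transitive closure of `→β`. -/
def BetaStar : Lam → Lam → Prop := Relation.ReflTransGen Beta

/-- `→β^k`: the `k`-fold composition of `→β`. -/
def BetaN : ℕ → Lam → Lam → Prop
  | 0, s, t => s = t
  | k + 1, s, t => ∃ u, Beta s u ∧ BetaN k u t

/-- `=β`, β-convertibility: the equivalence closure of `→β`. -/
inductive Conv : Lam → Lam → Prop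
  | rel {s t : Lam} : Beta s t → Conv s t
  | refl (s : Lam) : Conv s s
  | symm {s t : Lam} : Conv s t → Conv t s
  | trans {s t u : Lam} : Conv s t → Conv t u → Conv s u

/-- The free variables of a term (as de Bruijn indices). -/
def FV : Lam → Finset ℕ
  | var n => {n}
  | app s t => FV s ∪ FV t
  | abs t => ((FV t).erase 0).image (· - 1)

/-- `Y` is a fixed point combinator (fpc): `Y x =β x (Y x)` for a variable `x` not free in `Y`. -/
def IsFPC (Y : Lam) : Prop :=
  ∀ x : ℕ, x ∉ FV Y → Conv (app Y (var x)) (app (var x) (app Y (var x)))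

/-- `I = λx.x` -/
def combI : Lam := abs (var 0)

/-- `S = λxyz.xz(yz)` -/
def combS : Lam := abs (abs (abs (app (app (var 2) (var 0)) (app (var 1) (var 0)))))

/-- `B = λxyz.x(yz)` -/
def combB : Lam := abs (abs (abs (app (var 2) (app (var 1) (var 0)))))

/-- `δ = λab.b(ab)` -/
def delta : Lam := abs (abs (app (var 0) (app (var 1) (var 0))))

/-- `η = λxf.f(xxf)` -/
def etaC : Lam := abs (abs (app (var 0) (app (app (var 1) (var 1)) (var 0))))

/-- Curry's fpc `Y₀ = λf.(λx.f(xx))(λx.f(xx))` -/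
def curryY : Lam :=
  abs (app (abs (app (var 1) (app (var 0) (var 0))))
    (abs (app (var 1) (app (var 0) (var 0)))))

/-- `A B ⋯ B`: `A` applied to `n` copies of `B`, associating to the left. -/
def appN (A B : Lam) : ℕ → Lam
  | 0 => A
  | n + 1 => app (appN A B n) B

/-- `M N₁ ⋯ Nₘ`: `M` applied to the terms in `L`, associating to the left. -/
def appList (M : Lam) (L : List Lam) : Lam := L.foldl app M

/-- `A_Y = Y (λz. f z z)`, where `f` is a free variable. -/
def AY (Y : Lam) (f : ℕ) : Lam :=
  app Y (abs (app (app (var (f + 1)) (var 0)) (var 0)))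

/-- `Occ M d S`: `S` occurs as a subterm of `M` under `d` binders. -/
inductive Occ : Lam → ℕ → Lam → Prop
  | refl (M : Lam) : Occ M 0 M
  | appL {M : Lam} {d : ℕ} {s t : Lam} : Occ M d (Lam.app s t) → Occ M d s
  | appR {M : Lam} {d : ℕ} {s t : Lam} : Occ M d (Lam.app s t) → Occ M d t
  | abs {M : Lam} {d : ℕ} {t : Lam} : Occ M d (Lam.abs t) → Occ M (d + 1) t

/-- `M` is balanced (w.r.t. the free variable `f`): for every subterm `f s t` of `M`
    whose head is a free occurrence of the variable `f`, we have `s ≡ t`.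
    (Under `d` binders, the free variable `f` is the de Bruijn index `f + d`.) -/
def Balanced (f : ℕ) (M : Lam) : Prop :=
  ∀ (d : ℕ) (s t : Lam), Occ M d (app (app (var (f + d)) s) t) → s = t

-- ===== auxiliary development =====

theorem lift_lift (t : Lam) : ∀ i j, i ≤ j →
    lift i (lift j t) = lift (j + 1) (lift i t) := by
  induction t with
  | var n =>
    intro i j h
    simp only [lift]
    split_ifs <;> simp only [lift] <;> split_ifs <;>
      first | rfl | (congr 1; omega) | (exfalso; omega)
  | app s t ihs iht => intro i j h; simp [lift, ihs i j h, iht i j h]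
  | abs t ih => intro i j h; simp [lift, ih (i+1) (j+1) (by omega)]

theorem lift_subst (t : Lam) : ∀ u d k, d ≤ k →
    lift d (subst t k u) = subst (lift d t) (k + 1) (lift d u) := by
  induction t with
  | var n =>
    intro u d k h
    simp only [subst, lift]
    split_ifs <;> simp only [subst, lift] <;> split_ifs <;>
      first | rfl | (congr 1; omega) | (exfalso; omega)
  | app s t ihs iht => intro u d k h; simp [lift, subst, ihs u d k h, iht u d k h]
  | abs t ih =>
    intro u d k h
    simp only [lift, subst, ih (lift 0 u) (d+1) (k+1) (by omega)]
    rw [lift_lift u 0 d (by omega)]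

theorem lift_subst' (t : Lam) : ∀ u d k, k ≤ d →
    lift d (subst t k u) = subst (lift (d + 1) t) k (lift d u) := by
  induction t with
  | var n =>
    intro u d k h
    simp only [subst, lift]
    split_ifs <;> simp only [subst, lift] <;> split_ifs <;>
      first | rfl | (congr 1; omega) | (exfalso; omega)
  | app s t ihs iht => intro u d k h; simp [lift, subst, ihs u d k h, iht u d k h]
  | abs t ih =>
    intro u d k h
    simp only [lift, subst, ih (lift 0 u) (d+1) (k+1) (by omega)]
    rw [lift_lift u 0 d (by omega)]

theorem subst_lift (t : Lam) : ∀ u k, subst (lift k t) k u = t := by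
  induction t with
  | var n =>
    intro u k
    simp only [lift]
    split_ifs <;> simp only [subst] <;> split_ifs <;>
      first | rfl | (congr 1; omega) | (exfalso; omega)
  | app s t ihs iht => intro u k; simp [lift, subst, ihs, iht]
  | abs t ih => intro u k; simp [lift, subst, ih]

theorem subst_subst (t : Lam) : ∀ u v j k, j ≤ k →
    subst (subst t j u) k v
      = subst (subst t (k + 1) (lift j v)) j (subst u k v) := by
  induction t with
  | var n =>
    intro u v j k h
    simp only [subst]
    by_cases h1 : n < j
    · simp only [if_pos h1, if_pos (by omega : n < k + 1), subst,
        if_pos (by omega : n < k), if_pos h1]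
    · by_cases h2 : n = j
      · simp only [if_neg h1, if_pos h2, if_pos (by omega : n < k + 1), subst,
          if_neg h1, if_pos h2]
      · by_cases h3 : n < k + 1
        · simp only [if_neg h1, if_neg h2, if_pos h3, subst,
            if_pos (by omega : n - 1 < k), if_neg h1, if_neg h2, if_pos h3]
        · by_cases h4 : n = k + 1
          · simp only [if_neg h1, if_neg h2, if_neg h3, if_pos h4, subst]
            rw [if_neg (by omega : ¬ n - 1 < k), if_pos (by omega : n - 1 = k),
              subst_lift]
          · simp only [if_neg h1, if_neg h2, if_neg h3, if_neg h4, subst]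
            rw [if_neg (by omega : ¬ n - 1 < k), if_neg (by omega : ¬ n - 1 = k),
              if_neg (by omega : ¬ n - 1 < j), if_neg (by omega : ¬ n - 1 = j)]
  | app s t ihs iht => intro u v j k h; simp [subst, ihs u v j k h, iht u v j k h]
  | abs t ih =>
    intro u v j k h
    simp only [subst, ih (lift 0 u) (lift 0 v) (j+1) (k+1) (by omega)]
    rw [lift_lift v 0 j (by omega), lift_subst u v 0 k (by omega)]

inductive Par : Lam → Lam → Prop
  | var (n : ℕ) : Par (var n) (var n)
  | app {s s' t t' : Lam} : Par s s' → Par t t' → Par (app s t) (app s' t')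
  | abs {t t' : Lam} : Par t t' → Par (abs t) (abs t')
  | beta {t t' u u' : Lam} : Par t t' → Par u u' →
      Par (app (abs t) u) (subst t' 0 u')

theorem par_refl (t : Lam) : Par t t := by
  induction t with
  | var n => exact Par.var n
  | app s t ihs iht => exact Par.app ihs iht
  | abs t ih => exact Par.abs ih

theorem beta_par {s t : Lam} (h : Beta s t) : Par s t := by
  induction h with
  | beta t u => exact Par.beta (par_refl t) (par_refl u)
  | appL t _ ih => exact Par.app ih (par_refl t)
  | appR s _ ih => exact Par.app (par_refl s) ih
  | abs _ ih => exact Par.abs ih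

theorem bs_appL {s s' : Lam} (t : Lam) (h : BetaStar s s') :
    BetaStar (app s t) (app s' t) :=
  Relation.ReflTransGen.lift (fun x => Lam.app x t) (fun _ _ hb => Beta.appL t hb) _ _ h

theorem bs_appR (s : Lam) {t t' : Lam} (h : BetaStar t t') :
    BetaStar (app s t) (app s t') :=
  Relation.ReflTransGen.lift (fun x => Lam.app s x) (fun _ _ hb => Beta.appR s hb) _ _ h

theorem bs_abs {t t' : Lam} (h : BetaStar t t') :
    BetaStar (abs t) (abs t') :=
  Relation.ReflTransGen.lift Lam.abs (fun _ _ hb => Beta.abs hb) _ _ h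

theorem bs_app {s s' t t' : Lam} (hs : BetaStar s s') (ht : BetaStar t t') :
    BetaStar (app s t) (app s' t') :=
  Relation.ReflTransGen.trans (bs_appL t hs) (bs_appR s' ht)

theorem par_bs {s t : Lam} (h : Par s t) : BetaStar s t := by
  induction h with
  | var n => exact Relation.ReflTransGen.refl
  | app _ _ ihs iht => exact bs_app ihs iht
  | abs _ ih => exact bs_abs ih
  | @beta t t' u u' _ _ iht ihu =>
    exact Relation.ReflTransGen.tail (bs_app (bs_abs iht) ihu) (Beta.beta t' u')

theorem lift_par {t t' : Lam} (h : Par t t') : ∀ d, Par (lift d t) (lift d t') := by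
  induction h with
  | var n => intro d; simp only [lift]; split_ifs <;> exact par_refl _
  | app _ _ ihs iht => intro d; exact Par.app (ihs d) (iht d)
  | abs _ ih => intro d; exact Par.abs (ih (d+1))
  | @beta t t' u u' _ _ iht ihu =>
    intro d
    have := Par.beta (iht (d+1)) (ihu d)
    simp only [lift]
    rw [lift_subst' t' u' d 0 (by omega)]
    exact this

theorem subst_par {t t' : Lam} (ht : Par t t') :
    ∀ u u' k, Par u u' → Par (subst t k u) (subst t' k u') := by
  induction ht with
  | var n =>
    intro u u' k hu
    simp only [subst]
    split_ifs
    · exact par_refl _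
    · exact hu
    · exact par_refl _
  | app _ _ ihs iht => intro u u' k hu; exact Par.app (ihs u u' k hu) (iht u u' k hu)
  | abs _ ih => intro u u' k hu; exact Par.abs (ih _ _ (k+1) (lift_par hu 0))
  | @beta a a' b b' _ _ iha ihb =>
    intro u u' k hu
    simp only [subst]
    rw [subst_subst a' b' u' 0 k (by omega)]
    exact Par.beta (iha _ _ (k+1) (lift_par hu 0)) (ihb _ _ k hu)


/-- Takahashi's complete development. -/
def star : Lam → Lam
  | var n => var n
  | abs t => abs (star t)
  | app (abs t) u => subst (star t) 0 (star u)
  | app s t => app (star s) (star t)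

theorem star_app_nonabs {s t : Lam} (h : ∀ b, s ≠ abs b) :
    star (app s t) = app (star s) (star t) := by
  cases s with
  | var n => rfl
  | app a b => rfl
  | abs b => exact absurd rfl (h b)

theorem par_star {t u : Lam} (h : Par t u) : Par u (star t) := by
  induction h with
  | var n => exact Par.var n
  | @app s s' t t' hs ht ihs iht =>
    cases s with
    | abs b =>
      cases hs with
      | abs hb =>
        cases ihs with
        | abs ihb => exact Par.beta ihb iht
    | var n => exact Par.app ihs iht
    | app a c => exact Par.app ihs iht
  | abs _ ih => exact Par.abs ih
  | beta _ _ iht ihu => exact subst_par iht _ _ 0 ihu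

theorem par_to_star (t : Lam) : Par t (star t) := par_star (par_refl t)

theorem par_diamond {t a b : Lam} (ha : Par t a) (hb : Par t b) :
    ∃ c, Par a c ∧ Par b c :=
  ⟨star t, par_star ha, par_star hb⟩

/-- `n`-fold composition of parallel reduction. -/
def ParN : ℕ → Lam → Lam → Prop
  | 0, s, t => s = t
  | n + 1, s, t => ∃ u, Par s u ∧ ParN n u t

theorem parN_strip : ∀ n {t a b : Lam}, Par t a → ParN n t b →
    ∃ c, ParN n a c ∧ Par b c := by
  intro n
  induction n with
  | zero => intro t a b ha hb; cases hb; exact ⟨a, rfl, ha⟩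
  | succ n ih =>
    intro t a b ha hb
    obtain ⟨u, htu, hub⟩ := hb
    obtain ⟨v, hav, huv⟩ := par_diamond ha htu
    obtain ⟨c, hvc, hbc⟩ := ih huv hub
    exact ⟨c, ⟨v, hav, hvc⟩, hbc⟩

theorem parN_snoc : ∀ n {a b c : Lam}, ParN n a b → Par b c → ParN (n + 1) a c := by
  intro n
  induction n with
  | zero => intro a b c h hbc; cases h; exact ⟨c, hbc, rfl⟩
  | succ n ih =>
    intro a b c h hbc
    obtain ⟨u, hau, hub⟩ := h
    exact ⟨u, hau, ih hub hbc⟩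

theorem betastar_parN {a b : Lam} (h : BetaStar a b) : ∃ n, ParN n a b := by
  induction h with
  | refl => exact ⟨0, rfl⟩
  | tail _ hstep ih =>
    obtain ⟨n, hn⟩ := ih
    exact ⟨n + 1, parN_snoc n hn (beta_par hstep)⟩

theorem parN_bs : ∀ n {a b : Lam}, ParN n a b → BetaStar a b := by
  intro n
  induction n with
  | zero => intro a b h; cases h; exact Relation.ReflTransGen.refl
  | succ n ih =>
    intro a b h
    obtain ⟨u, hau, hub⟩ := h
    exact Relation.ReflTransGen.trans (par_bs hau) (ih hub)



/-- `GH c b t`: every occurrence of the variable `c` in `t` is in function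
    position of an application (if `b = true`, the whole term being a bare
    variable head is also allowed). -/
def GH : ℕ → Bool → Lam → Prop
  | c, b, var n => b = true ∨ n ≠ c
  | c, _, abs t => GH (c + 1) false t
  | c, _, app s t => GH c true s ∧ GH c false t

/-- The doubling map: `c s ↦ c s s` for every application with head `c`. -/
def D : ℕ → Lam → Lam
  | _, var n => var n
  | c, abs t => abs (D (c + 1) t)
  | c, app s t =>
      if s = var c then app (app (var c) (D c t)) (D c t)
      else app (D c s) (D c t)

theorem gh_mono {c : ℕ} {t : Lam} (h : GH c false t) (b : Bool) : GH c b t := by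
  cases t with
  | var n => rcases h with h | h; exacts [absurd h (by simp), Or.inr h]
  | app s u => exact h
  | abs u => exact h

theorem gh_ne_varc {c : ℕ} {t : Lam} (h : GH c false t) : t ≠ var c := by
  intro he; subst he
  rcases h with h | h
  · exact Bool.false_ne_true h
  · exact h rfl

theorem gh_lift : ∀ (t : Lam) (c d : ℕ) (b : Bool), d ≤ c → GH c b t →
    GH (c + 1) b (lift d t) := by
  intro t
  induction t with
  | var n =>
    intro c d b hd h
    simp only [lift]
    split_ifs with h1
    · exact Or.inr (by omega)
    · rcases h with h | h
      · exact Or.inl h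
      · exact Or.inr (by omega)
  | app s t ihs iht =>
    intro c d b hd h
    exact ⟨ihs c d true hd h.1, iht c d false hd h.2⟩
  | abs t ih =>
    intro c d b hd h
    exact ih (c + 1) (d + 1) false (by omega) h

theorem gh_subst : ∀ (t : Lam) (u : Lam) (k c : ℕ) (b : Bool), k ≤ c →
    GH (c + 1) b t → GH c false u → GH c b (subst t k u) := by
  intro t
  induction t with
  | var n =>
    intro u k c b hk ht hu
    simp only [subst]
    split_ifs with h1 h2
    · exact Or.inr (by omega)
    · exact gh_mono hu b
    · rcases ht with ht | ht
      · exact Or.inl ht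
      · exact Or.inr (by omega)
  | app s t ihs iht =>
    intro u k c b hk ht hu
    exact ⟨ihs u k c true hk ht.1 hu, iht u k c false hk ht.2 hu⟩
  | abs t ih =>
    intro u k c b hk ht hu
    exact ih (lift 0 u) (k + 1) (c + 1) false (by omega) ht (gh_lift u c 0 false (by omega) hu)

theorem gh_par {t t' : Lam} (h : Par t t') : ∀ c b, GH c b t → GH c b t' := by
  induction h with
  | var n => intro c b hg; exact hg
  | app _ _ ihs iht => intro c b hg; exact ⟨ihs c true hg.1, iht c false hg.2⟩
  | abs _ ih => intro c b hg; exact ih (c + 1) false hg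
  | @beta a a' u u' _ _ iha ihu =>
    intro c b hg
    exact gh_mono (gh_subst a' u' 0 c false (by omega)
      (iha (c + 1) false hg.1) (ihu c false hg.2)) b

theorem subst_eq_var {t u : Lam} {m : ℕ} (h : subst t 0 u = var m) :
    (t = var 0 ∧ u = var m) ∨ t = var (m + 1) := by
  cases t with
  | var n =>
    simp only [subst] at h
    split_ifs at h with h1 h2
    · omega
    · exact Or.inl ⟨by rw [h2], h⟩
    · right; cases h; congr 1; omega
  | app s t => simp [subst] at h
  | abs t => simp [subst] at h

theorem par_varc {s : Lam} {c : ℕ} (h : Par s (var c)) (hg : GH c true s) :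
    s = var c := by
  suffices h2 : ∀ v, Par s v → v = var c → s = var c from h2 _ h rfl
  intro v hv
  cases hv with
  | var n => intro he; exact he
  | app _ _ => intro he; cases he
  | abs _ => intro he; cases he
  | @beta t t' u u' ht hu =>
    intro he
    exfalso
    rcases subst_eq_var he with ⟨_, hu'⟩ | ht'
    · subst hu'
      exact gh_ne_varc (gh_par hu c false hg.2) rfl
    · subst ht'
      exact gh_ne_varc (gh_par ht (c + 1) false hg.1) rfl

theorem d_eq_var {P : Lam} {c n : ℕ} (h : D c P = var n) : P = var n := by
  cases P with
  | var m => simpa [D] using h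
  | app s t => simp only [D] at h; split_ifs at h
  | abs t => simp [D] at h


theorem d_nonabs {c : ℕ} {s : Lam} (h : ∀ b, s ≠ abs b) : ∀ b, D c s ≠ abs b := by
  cases s with
  | var n => intro b; simp [D]
  | app a t => intro b; simp only [D]; split_ifs <;> simp
  | abs t => exact absurd rfl (h t)

theorem lift_eq_varc {s : Lam} {c d : ℕ} (hd : d ≤ c) :
    lift d s = var (c + 1) ↔ s = var c := by
  constructor
  · intro h
    cases s with
    | var n =>
      simp only [lift] at h
      split_ifs at h with h1
      · injection h with h2; exact absurd h2 (by omega)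
      · injection h with h2; congr 1; omega
    | app a t => simp [lift] at h
    | abs t => simp [lift] at h
  · intro h; subst h; simp only [lift]; rw [if_neg (by omega)]

theorem d_lift : ∀ (t : Lam) (c d : ℕ), d ≤ c →
    D (c + 1) (lift d t) = lift d (D c t) := by
  intro t
  induction t with
  | var n => intro c d hd; simp only [lift, D]; split_ifs <;> rfl
  | app s t ihs iht =>
    intro c d hd
    simp only [lift, D]
    by_cases hs : s = var c
    · rw [if_pos ((lift_eq_varc hd).mpr hs), if_pos hs]
      simp only [lift, iht c d hd]
      rw [if_neg (by omega)]
    · rw [if_neg (fun h => hs ((lift_eq_varc hd).mp h)), if_neg hs]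
      simp [lift, ihs c d hd, iht c d hd]
  | abs t ih =>
    intro c d hd
    simp only [lift, D, ih (c + 1) (d + 1) (by omega)]

theorem subst_ne_varc {s u : Lam} {k c : ℕ} (hk : k ≤ c) (hs : s ≠ var (c + 1))
    (hu : GH c false u) : subst s k u ≠ var c := by
  cases s with
  | var n =>
    simp only [subst]
    split_ifs with h1 h2
    · simp; omega
    · exact gh_ne_varc hu
    · have hn : n ≠ c + 1 := fun h => hs (by rw [h])
      simp only [ne_eq, var.injEq]; omega
  | app a t => simp [subst]
  | abs t => simp [subst]

theorem d_subst : ∀ (t u : Lam) (k c : ℕ), k ≤ c → GH c false u →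
    D c (subst t k u) = subst (D (c + 1) t) k (D c u) := by
  intro t
  induction t with
  | var n =>
    intro u k c hk hu
    simp only [subst, D]
    split_ifs <;> rfl
  | app s t ihs iht =>
    intro u k c hk hu
    by_cases hs : s = var (c + 1)
    · subst hs
      have hvar : ∀ w : Lam, subst (var (c + 1)) k w = var c := by
        intro w
        simp only [subst]
        rw [if_neg (by omega), if_neg (by omega)]
        congr 1
      have hL : D c (subst (app (var (c + 1)) t) k u)
          = app (app (var c) (D c (subst t k u))) (D c (subst t k u)) := by
        show D c (app (subst (var (c + 1)) k u) (subst t k u)) = _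
        rw [hvar u]
        show (if (var c : Lam) = var c then _ else _) = _
        rw [if_pos rfl]
      have hR : subst (D (c + 1) (app (var (c + 1)) t)) k (D c u)
          = app (app (var c) (subst (D (c + 1) t) k (D c u)))
              (subst (D (c + 1) t) k (D c u)) := by
        show subst (if (var (c+1) : Lam) = var (c+1) then _ else _) k (D c u) = _
        rw [if_pos rfl]
        show app (app (subst (var (c + 1)) k (D c u)) _) _ = _
        rw [hvar (D c u)]
      rw [hL, hR, iht u k c hk hu]
    · have h1 : subst s k u ≠ var c := subst_ne_varc hk hs hu
      simp only [subst, D]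
      rw [if_neg h1, if_neg hs]
      simp only [subst, ihs u k c hk hu, iht u k c hk hu]
  | abs t ih =>
    intro u k c hk hu
    simp only [subst, D]
    rw [ih (lift 0 u) (k + 1) (c + 1) (by omega) (gh_lift u c 0 false (by omega) hu),
      d_lift u c 0 (by omega)]


theorem GH_var {c n : ℕ} {b : Bool} : GH c b (var n) ↔ (b = true ∨ n ≠ c) := Iff.rfl
theorem GH_abs {c : ℕ} {b : Bool} {t : Lam} : GH c b (abs t) = GH (c + 1) false t := rfl
theorem GH_app {c : ℕ} {b : Bool} {s t : Lam} :
    GH c b (app s t) = (GH c true s ∧ GH c false t) := rfl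

theorem D_var {c n : ℕ} : D c (var n) = var n := rfl
theorem D_abs {c : ℕ} {t : Lam} : D c (abs t) = abs (D (c + 1) t) := rfl
theorem D_app {c : ℕ} {s t : Lam} :
    D c (app s t) = if s = var c then app (app (var c) (D c t)) (D c t)
      else app (D c s) (D c t) := rfl

theorem star_var {n : ℕ} : star (var n) = var n := rfl
theorem star_abs {t : Lam} : star (abs t) = abs (star t) := rfl
theorem star_app_abs {b u : Lam} : star (app (abs b) u) = subst (star b) 0 (star u) := rfl

theorem d_star : ∀ (P : Lam) (c : ℕ) (b : Bool), GH c b P →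
    star (D c P) = D c (star P) := by
  intro P
  induction P with
  | var n => intro c b hg; rfl
  | abs t ih => intro c b hg; rw [D_abs, star_abs, star_abs, D_abs, ih (c + 1) false hg]
  | app s t ihs iht =>
    intro c b hg
    rw [GH_app] at hg
    obtain ⟨hgs, hgt⟩ := hg
    rw [D_app]
    by_cases hs : s = var c
    · subst hs
      rw [if_pos rfl]
      rw [star_app_nonabs (fun b h => by cases h), star_app_nonabs (fun b h => by cases h),
        star_var, iht c false hgt, star_app_nonabs (fun b h => by cases h), star_var,
        D_app, if_pos rfl]
    · have hsstar : star s ≠ var c := fun h => hs (par_varc (h ▸ par_to_star s) hgs)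
      rw [if_neg hs]
      cases s with
      | var n =>
        rw [star_app_nonabs (fun b h => by cases h), star_app_nonabs (fun b h => by cases h),
          star_var, iht c false hgt, D_app, if_neg hs]
        rfl
      | abs b0 =>
        have h := ihs c true hgs
        simp only [D_abs, star_abs, abs.injEq] at h
        rw [GH_abs] at hgs
        rw [D_abs, star_app_abs, star_app_abs, h, iht c false hgt,
          d_subst (star b0) (star t) 0 c (by omega) (gh_par (par_to_star t) c false hgt)]
      | app a1 a2 =>
        have hns : ∀ b, app a1 a2 ≠ abs b := fun b h => by cases h
        rw [star_app_nonabs (d_nonabs hns), star_app_nonabs hns,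
          ihs c true hgs, iht c false hgt, D_app, if_neg hsstar]



theorem occ_D {c : ℕ} : ∀ {M d S}, Occ M d S → ∀ P, M = D c P →
    (∃ R, S = D (c + d) R) ∨ (∃ R, S = app (var (c + d)) (D (c + d) R)) ∨
      S = var (c + d) := by
  intro M d S h
  induction h with
  | refl => intro P hP; exact Or.inl ⟨P, by rw [hP]; rfl⟩
  | appL _ ih =>
    intro P hP
    rcases ih P hP with ⟨R, hR⟩ | ⟨R, hR⟩ | hR
    · cases R with
      | var m => simp [D] at hR
      | abs r => simp [D] at hR
      | app r1 r2 =>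
        rw [D_app] at hR
        split_ifs at hR with h1
        · injection hR with hA hB
          exact Or.inr (Or.inl ⟨r2, hA⟩)
        · injection hR with hA hB
          exact Or.inl ⟨r1, hA⟩
    · injection hR with hA hB
      exact Or.inr (Or.inr hA)
    · cases hR
  | appR _ ih =>
    intro P hP
    rcases ih P hP with ⟨R, hR⟩ | ⟨R, hR⟩ | hR
    · cases R with
      | var m => simp [D] at hR
      | abs r => simp [D] at hR
      | app r1 r2 =>
        rw [D_app] at hR
        split_ifs at hR with h1
        · injection hR with hA hB
          exact Or.inl ⟨r2, hB⟩
        · injection hR with hA hB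
          exact Or.inl ⟨r2, hB⟩
    · injection hR with hA hB
      exact Or.inl ⟨R, hB⟩
    · cases hR
  | abs _ ih =>
    intro P hP
    rcases ih P hP with ⟨R, hR⟩ | ⟨R, hR⟩ | hR
    · cases R with
      | var m => simp [D] at hR
      | app r1 r2 => rw [D_app] at hR; split_ifs at hR
      | abs r =>
        rw [D_abs] at hR
        injection hR with hA
        exact Or.inl ⟨r, by rw [hA]; congr 1⟩
    · cases hR
    · cases hR

theorem balanced_D (f : ℕ) (P : Lam) : Balanced f (D f P) := by
  intro d s t h
  rcases occ_D h P rfl with ⟨R, hR⟩ | ⟨R, hR⟩ | hR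
  · cases R with
    | var m => simp [D] at hR
    | abs r => simp [D] at hR
    | app r1 r2 =>
      rw [D_app] at hR
      split_ifs at hR with h1
      · injection hR with hA hB
        injection hA with _ hA2
        rw [hA2, hB]
      · injection hR with hA hB
        exfalso
        cases r1 with
        | var m => exact absurd hA (by simp [D])
        | abs r => exact absurd hA (by simp [D])
        | app a b =>
          rw [D_app] at hA
          split_ifs at hA with h2
          · injection hA with hA2; cases hA2
          · injection hA with hA2
            exact h2 (d_eq_var hA2.symm)
  · injection hR with hA; cases hA
  · cases hR

theorem fv_abs {c : ℕ} {t : Lam} (h : c ∉ FV (abs t)) : c + 1 ∉ FV t := by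
  intro hc
  apply h
  show c ∈ ((FV t).erase 0).image (· - 1)
  exact Finset.mem_image.mpr ⟨c + 1, Finset.mem_erase.mpr ⟨by omega, hc⟩, by simp⟩

theorem gh_notfree : ∀ (t : Lam) (c : ℕ) (b : Bool), c ∉ FV t → GH c b t := by
  intro t
  induction t with
  | var n =>
    intro c b h
    exact Or.inr fun he => h (by simp [FV, he])
  | app s t ihs iht =>
    intro c b h
    simp only [FV, Finset.mem_union, not_or] at h
    exact ⟨ihs c true h.1, iht c false h.2⟩
  | abs t ih => intro c b h; exact ih (c + 1) false (fv_abs h)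

theorem d_notfree : ∀ (t : Lam) (c : ℕ), c ∉ FV t → D c t = t := by
  intro t
  induction t with
  | var n => intro c h; rfl
  | app s t ihs iht =>
    intro c h
    simp only [FV, Finset.mem_union, not_or] at h
    rw [D_app, if_neg (fun he => h.1 (by rw [he]; simp [FV])), ihs c h.1, iht c h.2]
  | abs t ih => intro c h; rw [D_abs, ih (c + 1) (fv_abs h)]

theorem main_sim : ∀ (n : ℕ) (P M : Lam) (c : ℕ), GH c false P → ParN n (D c P) M →
    ∃ Q, GH c false Q ∧ BetaStar M (D c Q) := by
  intro n
  induction n with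
  | zero =>
    intro P M c hg h
    cases h
    exact ⟨P, hg, Relation.ReflTransGen.refl⟩
  | succ n ih =>
    intro P M c hg h
    obtain ⟨M₁, h1, hrest⟩ := h
    have hstar : Par M₁ (D c (star P)) := by
      have h2 := par_star h1
      rwa [d_star P c false hg] at h2
    obtain ⟨L, hNL, hML⟩ := parN_strip n hstar hrest
    obtain ⟨Q, hgQ, hLQ⟩ := ih (star P) L c (gh_par (par_to_star P) c false hg) hNL
    exact ⟨Q, hgQ, Relation.ReflTransGen.trans (par_bs hML) hLQ⟩


/-- every reduct of `A_Y` can be balanced. -/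
theorem reducts_can_be_balanced (Y : Lam) (f : ℕ) (hY : IsFPC Y) (hf : f ∉ FV Y)
    (M : Lam) (hM : BetaStar (AY Y f) M) :
    ∃ N, BetaStar M N ∧ Balanced f N := by
  set P0 : Lam := app Y (abs (app (var (f + 1)) (var 0))) with hP0def
  have hP0 : AY Y f = D f P0 := by
    rw [hP0def, D_app, if_neg (fun h => hf (by rw [h]; simp [FV])), d_notfree Y f hf,
      D_abs, D_app, if_pos rfl]
    rfl
  have hg : GH f false P0 := by
    refine ⟨gh_notfree Y f true hf, ?_⟩
    show GH (f + 1) false (app (var (f + 1)) (var 0))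
    exact ⟨Or.inl rfl, Or.inr (by omega)⟩
  obtain ⟨n, hn⟩ := betastar_parN hM
  rw [hP0] at hn
  obtain ⟨Q, hgQ, hQ⟩ := main_sim n P0 M f hg hn
  exact ⟨D f Q, hQ, balanced_D f Q⟩

end Lam
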